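/- arXiv:1305.1376 — 4 statements merged into one kernel-verified Lean document; each statement's English description precedes it below -/
import Mathlib

section
/- Let H be a probability measure on [ω,∞) with ω > 0, y ∈ (0,1), and z ∈ ℂ with Im(z) > 0. Then the equation w = ∫ t / ((1+t)/√z − (1−y)√z − y·w) dH(t) has at most one solution w with Im(w) > 0. -/
open MeasureTheory

noncomputable def Dd (y : ℝ) (r w : ℂ) (t : ℝ) : ℂ :=
  (1 + (t:ℂ))/r - (1-(y:ℂ))*r - (y:ℂ)*w

lemma Dd_im (y : ℝ) (r w : ℂ) (t : ℝ) :
    (Dd y r w t).im = -((1+t)*r.im/Complex.normSq r + (1-y)*r.im + y*w.im) := by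
  simp [Dd, Complex.div_im, Complex.normSq_apply]
  ring

lemma Dd_meas (y : ℝ) (r w : ℂ) : Measurable (Dd y r w) := by
  unfold Dd; fun_prop

section
variable {y : ℝ} {r w : ℂ} (hy0 : 0 < y) (hy1 : y < 1) (hrim : 0 < r.im) (hw : 0 < w.im)

include hy0 hy1 hrim hw

lemma Dd_neg_im_lb (t : ℝ) :
    (1+t)*r.im/Complex.normSq r + (1-y)*r.im + y*w.im ≤ -(Dd y r w t).im := by
  rw [Dd_im]; ring_nf; exact le_refl _

lemma Dd_lb (t : ℝ) (ht : 0 ≤ t) :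
    (1+t)*r.im/Complex.normSq r * (y*w.im) ≤ Complex.normSq (Dd y r w t) := by
  have hr0 : r ≠ 0 := fun h => by simp [h] at hrim
  have hnr : 0 < Complex.normSq r := Complex.normSq_pos.mpr hr0
  have h1 : 0 < (1+t)*r.im/Complex.normSq r := by positivity
  have h2 := Dd_neg_im_lb hy0 hy1 hrim hw t
  have h3 : Complex.normSq (Dd y r w t) = (Dd y r w t).re^2 + (Dd y r w t).im^2 := by
    rw [Complex.normSq_apply]; ring
  set m := -(Dd y r w t).im with hm
  have h4 : 0 < (1-y)*r.im := by nlinarith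
  have h5 : 0 < y*w.im := by positivity
  have ha : (1+t)*r.im/Complex.normSq r ≤ m := by linarith
  have hb : y*w.im ≤ m := by linarith
  have : (1+t)*r.im/Complex.normSq r * (y*w.im) ≤ m*m :=
    mul_le_mul ha hb (le_of_lt h5) (le_trans (le_of_lt h1) ha)
  nlinarith [sq_nonneg ((Dd y r w t).re)]

lemma Dd_pos (t : ℝ) (ht : 0 ≤ t) : 0 < Complex.normSq (Dd y r w t) := by
  have hr0 : r ≠ 0 := fun h => by simp [h] at hrim
  have hnr : 0 < Complex.normSq r := Complex.normSq_pos.mpr hr0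
  have h1 : 0 < (1+t)*r.im/Complex.normSq r * (y*w.im) := by positivity
  exact lt_of_lt_of_le h1 (Dd_lb hy0 hy1 hrim hw t ht)

lemma Dd_ne (t : ℝ) (ht : 0 ≤ t) : Dd y r w t ≠ 0 := by
  intro h
  have := Dd_pos hy0 hy1 hrim hw t ht
  rw [h] at this; simp at this

lemma Dd_ratio_bound (t : ℝ) (ht : 0 ≤ t) :
    t / Complex.normSq (Dd y r w t) ≤ Complex.normSq r / (r.im * y * w.im) := by
  have hr0 : r ≠ 0 := fun h => by simp [h] at hrim
  have hnr : 0 < Complex.normSq r := Complex.normSq_pos.mpr hr0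
  have hQ := Dd_pos hy0 hy1 hrim hw t ht
  have hlb := Dd_lb hy0 hy1 hrim hw t ht
  rw [div_le_div_iff₀ hQ (by positivity)]
  have : (1+t)*r.im/Complex.normSq r * (y*w.im) * Complex.normSq r = (1+t)*(r.im*y*w.im) := by
    field_simp
  nlinarith [mul_le_mul_of_nonneg_right hlb (le_of_lt hnr), hw, hy0, hrim]

lemma Dd_abs_lb1 (t : ℝ) (ht : 0 ≤ t) :
    (1+t)*r.im/Complex.normSq r ≤ ‖Dd y r w t‖ := by
  have hr0 : r ≠ 0 := fun h => by simp [h] at hrim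
  have hnr : 0 < Complex.normSq r := Complex.normSq_pos.mpr hr0
  have h2 := Dd_neg_im_lb hy0 hy1 hrim hw t
  have h4 : 0 < (1-y)*r.im := by nlinarith
  have h5 : 0 < y*w.im := by positivity
  calc (1+t)*r.im/Complex.normSq r ≤ -(Dd y r w t).im := by linarith
    _ ≤ |(Dd y r w t).im| := neg_le_abs _
    _ ≤ ‖Dd y r w t‖ := Complex.abs_im_le_norm _

lemma Dd_abs_lb2 (t : ℝ) (ht : 0 ≤ t) :
    y*w.im ≤ ‖Dd y r w t‖ := by
  have hr0 : r ≠ 0 := fun h => by simp [h] at hrim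
  have hnr : 0 < Complex.normSq r := Complex.normSq_pos.mpr hr0
  have h2 := Dd_neg_im_lb hy0 hy1 hrim hw t
  have h4 : 0 < (1-y)*r.im := by nlinarith
  have h1 : 0 < (1+t)*r.im/Complex.normSq r := by positivity
  calc y*w.im ≤ -(Dd y r w t).im := by linarith
    _ ≤ |(Dd y r w t).im| := neg_le_abs _
    _ ≤ ‖Dd y r w t‖ := Complex.abs_im_le_norm _

lemma Dd_int_g (H : Measure ℝ) [IsProbabilityMeasure H] (ω : ℝ) (hω : 0 < ω)
    (hsupp : ∀ᵐ t ∂H, ω ≤ t) :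
    Integrable (fun t : ℝ => t / Complex.normSq (Dd y r w t)) H := by
  have hr0 : r ≠ 0 := fun h => by simp [h] at hrim
  have hnr : 0 < Complex.normSq r := Complex.normSq_pos.mpr hr0
  refine (integrable_const (Complex.normSq r / (r.im * y * w.im))).mono' ?_ ?_
  · exact (measurable_id.div
      (Complex.continuous_normSq.measurable.comp (Dd_meas y r w))).aestronglyMeasurable
  · filter_upwards [hsupp] with t ht
    have ht0 : 0 ≤ t := le_trans hω.le ht
    have hQ : 0 < Complex.normSq (Dd y r w t) := Dd_pos hy0 hy1 hrim hw t ht0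
    rw [Real.norm_eq_abs, abs_of_nonneg (by positivity)]
    exact Dd_ratio_bound hy0 hy1 hrim hw t ht0

lemma Dd_int_f (H : Measure ℝ) [IsProbabilityMeasure H] (ω : ℝ) (hω : 0 < ω)
    (hsupp : ∀ᵐ t ∂H, ω ≤ t) :
    Integrable (fun t : ℝ => (t:ℂ) / Dd y r w t) H := by
  have hr0 : r ≠ 0 := fun h => by simp [h] at hrim
  have hnr : 0 < Complex.normSq r := Complex.normSq_pos.mpr hr0
  refine (integrable_const (Complex.normSq r / r.im)).mono' ?_ ?_
  · exact ((Complex.measurable_ofReal.comp measurable_id).div (Dd_meas y r w)).aestronglyMeasurable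
  · filter_upwards [hsupp] with t ht
    have ht0 : 0 ≤ t := le_trans hω.le ht
    have hQ : 0 < Complex.normSq (Dd y r w t) := Dd_pos hy0 hy1 hrim hw t ht0
    have habs : 0 < ‖Dd y r w t‖ := by
      have := Complex.normSq_pos.mp hQ
      exact norm_pos_iff.mpr this
    have hlb := Dd_abs_lb1 hy0 hy1 hrim hw t ht0
    rw [norm_div, Complex.norm_real, Real.norm_eq_abs,
      abs_of_nonneg ht0, div_le_div_iff₀ habs (by positivity)]
    have h1 : (1+t)*r.im/Complex.normSq r * Complex.normSq r = (1+t)*r.im := by field_simp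
    nlinarith [mul_le_mul_of_nonneg_right hlb hnr.le, habs, hrim, h1]

lemma Dd_key (H : Measure ℝ) [IsProbabilityMeasure H] (ω : ℝ) (hω : 0 < ω)
    (hsupp : ∀ᵐ t ∂H, ω ≤ t)
    (hfix : w = ∫ t : ℝ, (t : ℂ) / Dd y r w t ∂H) :
    y * ∫ t : ℝ, t / Complex.normSq (Dd y r w t) ∂H < 1 := by
  have hr0 : r ≠ 0 := fun h => by simp [h] at hrim
  have hnr : 0 < Complex.normSq r := Complex.normSq_pos.mpr hr0
  set Q : ℝ → ℝ := fun t => Complex.normSq (Dd y r w t) with hQdef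
  have hf : Integrable (fun t : ℝ => (t:ℂ) / Dd y r w t) H := Dd_int_f hy0 hy1 hrim hw H ω hω hsupp
  have hg : Integrable (fun t : ℝ => t / Q t) H := Dd_int_g hy0 hy1 hrim hw H ω hω hsupp
  have hq1 : Integrable (fun t : ℝ => t * (-(Dd y r w t).im) / Q t) H := by
    have := hf.im
    refine this.congr (Filter.Eventually.of_forall fun t => ?_)
    show ((t:ℂ) / Dd y r w t).im = _
    rw [Complex.div_im]
    simp only [hQdef, Complex.ofReal_im, Complex.ofReal_re]
    ring
  have hq2 : Integrable (fun t : ℝ => y * w.im * (t / Q t)) H := hg.const_mul _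
  have him : w.im = ∫ t : ℝ, t * (-(Dd y r w t).im) / Q t ∂H := by
    conv_lhs => rw [hfix]
    have hii := integral_im (𝕜 := ℂ) hf
    simp only [RCLike.im_to_complex] at hii
    rw [← hii]
    refine integral_congr_ae (Filter.Eventually.of_forall fun t => ?_)
    show ((t:ℂ) / Dd y r w t).im = _
    rw [Complex.div_im]
    simp only [hQdef, Complex.ofReal_im, Complex.ofReal_re]
    ring
  set S := ∫ t : ℝ, t / Q t ∂H with hSdef
  have hS0 : 0 ≤ S := by
    refine integral_nonneg_of_ae ?_
    filter_upwards [hsupp] with t ht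
    have ht0 : 0 ≤ t := le_trans hω.le ht
    have := Dd_pos hy0 hy1 hrim hw t ht0
    positivity
  set p : ℝ → ℝ := fun t => t * (-(Dd y r w t).im) / Q t - y * w.im * (t / Q t) with hpdef
  have hp : Integrable p H := hq1.sub hq2
  have hsplit : ∫ t, p t ∂H = (∫ t : ℝ, t * (-(Dd y r w t).im) / Q t ∂H) - y * w.im * S := by
    rw [hpdef, integral_sub hq1 hq2, integral_const_mul]
  have hP : w.im = (∫ t, p t ∂H) + y * w.im * S := by
    rw [hsplit, ← him]; ring
  have hppos : ∀ᵐ t ∂H, 0 < p t := by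
    filter_upwards [hsupp] with t ht
    have ht0 : 0 ≤ t := le_trans hω.le ht
    have hQp : 0 < Q t := Dd_pos hy0 hy1 hrim hw t ht0
    have himeq : (Dd y r w t).im = -((1+t)*r.im/Complex.normSq r + (1-y)*r.im + y*w.im) :=
      Dd_im y r w t
    have htpos : 0 < t := lt_of_lt_of_le hω ht
    have hpe : p t = t * ((1+t)*r.im/Complex.normSq r + (1-y)*r.im) / Q t := by
      rw [hpdef]; simp only [himeq]; field_simp; ring
    rw [hpe]
    have h1 : 0 < (1+t)*r.im/Complex.normSq r := by positivity
    have h2 : 0 < (1-y)*r.im := by nlinarith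
    positivity
  have hPpos : 0 < ∫ t, p t ∂H := by
    rw [integral_pos_iff_support_of_nonneg_ae (hppos.mono fun t h => h.le) hp]
    by_contra hcon
    push_neg at hcon
    have hz : H (Function.support p) = 0 := le_antisymm hcon zero_le
    have hz2 : ∀ᵐ t ∂H, p t = 0 := by
      rw [ae_iff]
      exact measure_mono_null (fun t ht => ht) hz
    have hfalse : ∀ᵐ (t : ℝ) ∂H, False := by
      filter_upwards [hz2, hppos] with t h1 h2
      exact absurd h1 (ne_of_gt h2)
    obtain ⟨t, ht⟩ := hfalse.exists
    exact ht
  have hfin : y * S * w.im < 1 * w.im := by nlinarith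
  exact lt_of_mul_lt_mul_right hfin hw.le

end

lemma amgm_div (t a b : ℝ) (ht : 0 ≤ t) (ha : 0 < a) (hb : 0 < b) :
    t/(a*b) ≤ (t/a^2 + t/b^2)/2 := by
  have hR : (t/a^2 + t/b^2)/2 = t*(a^2+b^2)/(2*a^2*b^2) := by field_simp; ring
  rw [hR, div_le_div_iff₀ (by positivity) (by positivity)]
  nlinarith [mul_nonneg (mul_nonneg (mul_nonneg ht ha.le) hb.le) (sq_nonneg (a-b))]

/-- Uniqueness of the solution with positive imaginary part of the fixed point
equation w = ∫ t/((1+t)/√z − (1−y)√z − y·w) dH(t). -/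
theorem stmt_3 (H : Measure ℝ) [IsProbabilityMeasure H]
    (ω : ℝ) (hω : 0 < ω) (hsupp : ∀ᵐ t ∂H, ω ≤ t)
    (y : ℝ) (hy : y ∈ Set.Ioo (0 : ℝ) 1)
    (z : ℂ) (hz : 0 < z.im)
    (r : ℂ) (hr : r ^ 2 = z) (hrim : 0 < r.im)
    (w₁ w₂ : ℂ) (hw₁ : 0 < w₁.im) (hw₂ : 0 < w₂.im)
    (hfix₁ : w₁ = ∫ t, (t : ℂ) / ((1 + (t : ℂ)) / r - (1 - (y : ℂ)) * r - (y : ℂ) * w₁) ∂H)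
    (hfix₂ : w₂ = ∫ t, (t : ℂ) / ((1 + (t : ℂ)) / r - (1 - (y : ℂ)) * r - (y : ℂ) * w₂) ∂H) :
    w₁ = w₂ := by
  obtain ⟨hy0, hy1⟩ := hy
  have hr0 : r ≠ 0 := fun h => by simp [h] at hrim
  have hnr : 0 < Complex.normSq r := Complex.normSq_pos.mpr hr0
  have hfix₁' : w₁ = ∫ t : ℝ, (t:ℂ) / Dd y r w₁ t ∂H := hfix₁
  have hfix₂' : w₂ = ∫ t : ℝ, (t:ℂ) / Dd y r w₂ t ∂H := hfix₂
  by_contra hne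
  have hsub : w₁ - w₂ ≠ 0 := sub_ne_zero.mpr hne
  -- integrability
  have hf₁ := Dd_int_f hy0 hy1 hrim hw₁ H ω hω hsupp
  have hf₂ := Dd_int_f hy0 hy1 hrim hw₂ H ω hω hsupp
  have hg₁ := Dd_int_g hy0 hy1 hrim hw₁ H ω hω hsupp
  have hg₂ := Dd_int_g hy0 hy1 hrim hw₂ H ω hω hsupp
  have hkey₁ := Dd_key hy0 hy1 hrim hw₁ H ω hω hsupp hfix₁'
  have hkey₂ := Dd_key hy0 hy1 hrim hw₂ H ω hω hsupp hfix₂'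
  set S₁ := ∫ t : ℝ, t / Complex.normSq (Dd y r w₁ t) ∂H with hS₁
  set S₂ := ∫ t : ℝ, t / Complex.normSq (Dd y r w₂ t) ∂H with hS₂
  -- integrability of the product integrand
  have hh : Integrable (fun t : ℝ => (t:ℂ) / (Dd y r w₁ t * Dd y r w₂ t)) H := by
    refine (integrable_const (Complex.normSq r / (r.im * (y * w₂.im)))).mono' ?_ ?_
    · exact ((Complex.measurable_ofReal.comp measurable_id).div
        ((Dd_meas y r w₁).mul (Dd_meas y r w₂))).aestronglyMeasurable
    · filter_upwards [hsupp] with t ht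
      have ht0 : 0 ≤ t := le_trans hω.le ht
      have ha₁ : 0 < ‖Dd y r w₁ t‖ :=
        norm_pos_iff.mpr (Dd_ne hy0 hy1 hrim hw₁ t ht0)
      have ha₂ : 0 < ‖Dd y r w₂ t‖ :=
        norm_pos_iff.mpr (Dd_ne hy0 hy1 hrim hw₂ t ht0)
      have hlb₁ := Dd_abs_lb1 hy0 hy1 hrim hw₁ t ht0
      have hlb₂ := Dd_abs_lb2 hy0 hy1 hrim hw₂ t ht0
      rw [norm_div, Complex.norm_real, Real.norm_eq_abs,
        abs_of_nonneg ht0, norm_mul, div_le_div_iff₀ (by positivity) (by positivity)]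
      have h1 : (1+t)*r.im/Complex.normSq r * Complex.normSq r = (1+t)*r.im := by field_simp
      have h2 : (1+t)*r.im/Complex.normSq r * (y*w₂.im)
          ≤ ‖Dd y r w₁ t‖ * ‖Dd y r w₂ t‖ :=
        mul_le_mul hlb₁ hlb₂ (by positivity) ha₁.le
      have h3 : (1+t)*r.im/Complex.normSq r * (y*w₂.im) * Complex.normSq r
          = (1+t)*(r.im*(y*w₂.im)) := by field_simp
      nlinarith [mul_le_mul_of_nonneg_right h2 hnr.le, h3, mul_pos hrim (mul_pos hy0 hw₂)]
  -- difference identity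
  have e2 : ∫ t : ℝ, ((t:ℂ) / Dd y r w₁ t - (t:ℂ) / Dd y r w₂ t) ∂H
      = (y:ℂ) * (w₁ - w₂) * ∫ t : ℝ, (t:ℂ) / (Dd y r w₁ t * Dd y r w₂ t) ∂H := by
    rw [← integral_const_mul]
    refine integral_congr_ae ?_
    filter_upwards [hsupp] with t ht
    have ht0 : 0 ≤ t := le_trans hω.le ht
    have hne₁ : Dd y r w₁ t ≠ 0 := Dd_ne hy0 hy1 hrim hw₁ t ht0
    have hne₂ : Dd y r w₂ t ≠ 0 := Dd_ne hy0 hy1 hrim hw₂ t ht0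
    have hd : Dd y r w₂ t - Dd y r w₁ t = (y:ℂ) * (w₁ - w₂) := by unfold Dd; ring
    field_simp
    linear_combination (t:ℂ) * hd
  have hstep : w₁ - w₂ = (y:ℂ) * (w₁ - w₂) * ∫ t : ℝ, (t:ℂ) / (Dd y r w₁ t * Dd y r w₂ t) ∂H := by
    rw [← e2, integral_sub hf₁ hf₂, ← hfix₁', ← hfix₂']
  set K := ∫ t : ℝ, (t:ℂ) / (Dd y r w₁ t * Dd y r w₂ t) ∂H with hK
  have hyK : (y:ℂ) * K = 1 := by
    have hzero : (w₁ - w₂) * (1 - (y:ℂ) * K) = 0 := by linear_combination hstep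
    rcases mul_eq_zero.mp hzero with h | h
    · exact absurd h hsub
    · linear_combination -h
  have hnorm1 : 1 = y * ‖K‖ := by
    have := congrArg norm hyK
    rw [norm_mul, Complex.norm_real, Real.norm_eq_abs, abs_of_pos hy0,
      norm_one] at this
    exact this.symm
  have hNle : ‖K‖ ≤ (S₁ + S₂)/2 := by
    refine le_trans (norm_integral_le_integral_norm _) ?_
    have hint : Integrable (fun t : ℝ => (t / Complex.normSq (Dd y r w₁ t)
        + t / Complex.normSq (Dd y r w₂ t))/2) H := (hg₁.add hg₂).div_const 2
    have hmono : ∫ t : ℝ, ‖(t:ℂ) / (Dd y r w₁ t * Dd y r w₂ t)‖ ∂H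
        ≤ ∫ t : ℝ, (t / Complex.normSq (Dd y r w₁ t) + t / Complex.normSq (Dd y r w₂ t))/2 ∂H := by
      refine integral_mono_ae hh.norm hint ?_
      filter_upwards [hsupp] with t ht
      have ht0 : 0 ≤ t := le_trans hω.le ht
      have ha₁ : 0 < ‖Dd y r w₁ t‖ :=
        norm_pos_iff.mpr (Dd_ne hy0 hy1 hrim hw₁ t ht0)
      have ha₂ : 0 < ‖Dd y r w₂ t‖ :=
        norm_pos_iff.mpr (Dd_ne hy0 hy1 hrim hw₂ t ht0)
      rw [norm_div, Complex.norm_real, Real.norm_eq_abs,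
        abs_of_nonneg ht0, norm_mul, Complex.normSq_eq_norm_sq, Complex.normSq_eq_norm_sq]
      exact amgm_div t _ _ ht0 ha₁ ha₂
    calc ∫ t : ℝ, ‖(t:ℂ) / (Dd y r w₁ t * Dd y r w₂ t)‖ ∂H
        ≤ _ := hmono
      _ = (S₁ + S₂)/2 := by rw [integral_div, integral_add hg₁ hg₂]
  have : y * ‖K‖ ≤ y * ((S₁ + S₂)/2) := mul_le_mul_of_nonneg_left hNle hy0.le
  nlinarith [hkey₁, hkey₂, hy0]
end

section
/- Let H be a probability measure, y ∈ (0,1), and z ∈ ℂ with Im(z) ≠ 0. Suppose m₁ and m₂ are two complex numbers each satisfying mⱼ = ∫ 1/(λ/z − 1/(1 − y·mⱼ)) dH(λ) with Im(mⱼ)·Im(z) > 0 and 1 − y·mⱼ ≠ 0. Then m₁ = m₂. -/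
open MeasureTheory Complex

private lemma imw (y : ℝ) (m : ℂ) :
    (1/(1-(y:ℂ)*m)).im = y*m.im/Complex.normSq (1-(y:ℂ)*m) := by
  rw [one_div, Complex.inv_im]
  simp [Complex.sub_im, Complex.mul_im]

private lemma imd (y t : ℝ) (z m : ℂ) :
    ((t:ℂ)/z - 1/(1-(y:ℂ)*m)).im
      = -(t*(z.im/Complex.normSq z)) - (1/(1-(y:ℂ)*m)).im := by
  rw [Complex.sub_im, Complex.div_im]
  simp
  ring

private lemma imsq_le_normSq (w : ℂ) : w.im^2 ≤ Complex.normSq w := by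
  rw [Complex.normSq_apply]; nlinarith [sq_nonneg w.re]

private lemma wim_pos {y : ℝ} {m : ℂ} (hy : 0 < y) (him : 0 < m.im)
    (hden : 1 - (y:ℂ)*m ≠ 0) : 0 < (1/(1-(y:ℂ)*m)).im := by
  rw [imw]
  have := Complex.normSq_pos.mpr hden
  positivity

/-- lower bound for normSq of the denominator, for t ≥ 0. -/
private lemma normSq_d_lb {y t : ℝ} (ht : 0 ≤ t) {z m : ℂ} (hz : 0 < z.im)
    (hc : 0 < (1/(1-(y:ℂ)*m)).im) :
    (t*(z.im/Complex.normSq z) + (1/(1-(y:ℂ)*m)).im)^2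
      ≤ Complex.normSq ((t:ℂ)/z - 1/(1-(y:ℂ)*m)) := by
  have h := imsq_le_normSq ((t:ℂ)/z - 1/(1-(y:ℂ)*m))
  rw [imd] at h
  calc (t*(z.im/Complex.normSq z) + (1/(1-(y:ℂ)*m)).im)^2
      = (-(t*(z.im/Complex.normSq z)) - (1/(1-(y:ℂ)*m)).im)^2 := by ring
    _ ≤ _ := h

private lemma meas_f (y : ℝ) (z m : ℂ) :
    Measurable (fun t : ℝ => 1 / ((t:ℂ)/z - 1/(1-(y:ℂ)*m))) := by
  simp only [one_div]
  exact ((Complex.measurable_ofReal.div_const z).sub measurable_const).inv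

private lemma meas_d (y : ℝ) (z m : ℂ) :
    Measurable (fun t : ℝ => Complex.normSq ((t:ℂ)/z - 1/(1-(y:ℂ)*m))) :=
  Complex.continuous_normSq.measurable.comp
    ((Complex.measurable_ofReal.div_const z).sub measurable_const)

/-- integrability of 1/d. -/
private lemma int_f (H : Measure ℝ) [IsProbabilityMeasure H]
    (hsupp : ∀ᵐ t ∂H, 0 < t) {y : ℝ} (hy : 0 < y) {z m : ℂ} (hz : 0 < z.im)
    (him : 0 < m.im) (hden : 1 - (y:ℂ)*m ≠ 0) :
    Integrable (fun t : ℝ => 1 / ((t:ℂ)/z - 1/(1-(y:ℂ)*m))) H := by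
  set c := (1/(1-(y:ℂ)*m)).im with hc
  have hcpos : 0 < c := wim_pos hy him hden
  refine Integrable.mono' (integrable_const (1/c)) (meas_f y z m).aestronglyMeasurable ?_
  filter_upwards [hsupp] with t ht
  have hlb := normSq_d_lb ht.le hz hcpos
  have hnz : 0 < Complex.normSq z := Complex.normSq_pos.mpr (fun h => by simp [h] at hz)
  have h1 : c ≤ ‖(t:ℂ)/z - 1/(1-(y:ℂ)*m)‖ := by
    have : c^2 ≤ ‖(t:ℂ)/z - 1/(1-(y:ℂ)*m)‖^2 := by
      rw [Complex.sq_norm]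
      nlinarith [hlb, mul_nonneg ht.le (div_nonneg hz.le hnz.le)]
    nlinarith [norm_nonneg ((t:ℂ)/z - 1/(1-(y:ℂ)*m))]
  rw [norm_div, norm_one]
  exact one_div_le_one_div_of_le hcpos h1

/-- integrability of 1/normSq d. -/
private lemma int_g (H : Measure ℝ) [IsProbabilityMeasure H]
    (hsupp : ∀ᵐ t ∂H, 0 < t) {y : ℝ} (hy : 0 < y) {z m : ℂ} (hz : 0 < z.im)
    (him : 0 < m.im) (hden : 1 - (y:ℂ)*m ≠ 0) :
    Integrable (fun t : ℝ => 1 / Complex.normSq ((t:ℂ)/z - 1/(1-(y:ℂ)*m))) H := by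
  set c := (1/(1-(y:ℂ)*m)).im with hc
  have hcpos : 0 < c := wim_pos hy him hden
  have hmeas : Measurable (fun t : ℝ => 1 / Complex.normSq ((t:ℂ)/z - 1/(1-(y:ℂ)*m))) := by
    simpa only [one_div, Pi.inv_def] using (meas_d y z m).inv
  refine Integrable.mono' (integrable_const (1/c^2)) hmeas.aestronglyMeasurable ?_
  filter_upwards [hsupp] with t ht
  have hlb := normSq_d_lb ht.le hz hcpos
  have hnz : 0 < Complex.normSq z := Complex.normSq_pos.mpr (fun h => by simp [h] at hz)
  have hA : 0 ≤ t*(z.im/Complex.normSq z) := mul_nonneg ht.le (div_nonneg hz.le hnz.le)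
  have h2 : c^2 ≤ Complex.normSq ((t:ℂ)/z - 1/(1-(y:ℂ)*m)) := by nlinarith
  have hsq : 0 < Complex.normSq ((t:ℂ)/z - 1/(1-(y:ℂ)*m)) :=
    lt_of_lt_of_le (pow_pos (add_pos_of_nonneg_of_pos hA hcpos) 2) hlb
  have hnn : (0:ℝ) ≤ 1 / Complex.normSq ((t:ℂ)/z - 1/(1-(y:ℂ)*m)) :=
    div_nonneg zero_le_one hsq.le
  rw [Real.norm_eq_abs, _root_.abs_of_nonneg hnn]
  exact one_div_le_one_div_of_le (by positivity) h2

/-- integrability of t/normSq d. -/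
private lemma int_h (H : Measure ℝ) [IsProbabilityMeasure H]
    (hsupp : ∀ᵐ t ∂H, 0 < t) {y : ℝ} (hy : 0 < y) {z m : ℂ} (hz : 0 < z.im)
    (him : 0 < m.im) (hden : 1 - (y:ℂ)*m ≠ 0) :
    Integrable (fun t : ℝ => t / Complex.normSq ((t:ℂ)/z - 1/(1-(y:ℂ)*m))) H := by
  set c := (1/(1-(y:ℂ)*m)).im with hc
  set a := z.im/Complex.normSq z with ha
  have hcpos : 0 < c := wim_pos hy him hden
  have hnz : 0 < Complex.normSq z := Complex.normSq_pos.mpr (fun h => by simp [h] at hz)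
  have hapos : 0 < a := div_pos hz hnz
  have hmeas : Measurable (fun t : ℝ => t / Complex.normSq ((t:ℂ)/z - 1/(1-(y:ℂ)*m))) :=
    measurable_id.div (meas_d y z m)
  refine Integrable.mono' (integrable_const (1/(a*c))) hmeas.aestronglyMeasurable ?_
  filter_upwards [hsupp] with t ht
  have hlb : (t*a+c)^2 ≤ Complex.normSq ((t:ℂ)/z - 1/(1-(y:ℂ)*m)) := normSq_d_lb ht.le hz hcpos
  have hsq : 0 < Complex.normSq ((t:ℂ)/z - 1/(1-(y:ℂ)*m)) := lt_of_lt_of_le (by positivity) hlb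
  have hnn : (0:ℝ) ≤ t / Complex.normSq ((t:ℂ)/z - 1/(1-(y:ℂ)*m)) :=
    div_nonneg ht.le hsq.le
  rw [Real.norm_eq_abs, _root_.abs_of_nonneg hnn]
  rw [div_le_div_iff₀ hsq (by positivity)]
  nlinarith [sq_nonneg (t*a), mul_pos hapos hcpos,
    mul_nonneg (mul_nonneg ht.le hapos.le) hcpos.le]

/-- The key inequality: K = ∫ y/(normSq(1-ym) normSq(d t)) dH < 1. -/
private lemma key_lt_one (H : Measure ℝ) [IsProbabilityMeasure H]
    (hsupp : ∀ᵐ t ∂H, 0 < t) {y : ℝ} (hy : 0 < y) {z m : ℂ} (hz : 0 < z.im)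
    (him : 0 < m.im) (hden : 1 - (y:ℂ)*m ≠ 0)
    (heq : m = ∫ t, 1 / ((t : ℂ) / z - 1 / (1 - (y : ℂ) * m)) ∂H) :
    ∫ t, y / (Complex.normSq (1-(y:ℂ)*m)
        * Complex.normSq ((t:ℂ)/z - 1/(1-(y:ℂ)*m))) ∂H < 1 := by
  have hcpos : 0 < (1/(1-(y:ℂ)*m)).im := wim_pos hy him hden
  set c : ℝ := (1/(1-(y:ℂ)*m)).im with hcdef
  have hnz : 0 < Complex.normSq z := Complex.normSq_pos.mpr (fun h => by simp [h] at hz)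
  set a : ℝ := z.im/Complex.normSq z with hadef
  have hapos : 0 < a := div_pos hz hnz
  have hIf := int_f H hsupp hy hz him hden
  have hIg := int_g H hsupp hy hz him hden
  have hIh := int_h H hsupp hy hz him hden
  -- Im of the fixed point equation
  have him_eq : m.im = ∫ t, (1 / ((t : ℂ) / z - 1 / (1 - (y : ℂ) * m))).im ∂H := by
    have h := integral_im (𝕜 := ℂ) hIf
    simp only [← RCLike.im_eq_complex_im]
    conv_lhs => rw [heq]
    exact h.symm
  -- pointwise formula for the imaginary part
  have hptw : ∀ᵐ (t : ℝ) ∂H, (1 / ((t : ℂ) / z - 1 / (1 - (y : ℂ) * m))).im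
      = a * (t / Complex.normSq ((t:ℂ)/z - 1/(1-(y:ℂ)*m)))
        + c * (1 / Complex.normSq ((t:ℂ)/z - 1/(1-(y:ℂ)*m))) := by
    filter_upwards [hsupp] with t ht
    have hlb : (t*a+c)^2 ≤ Complex.normSq ((t:ℂ)/z - 1/(1-(y:ℂ)*m)) :=
      normSq_d_lb ht.le hz hcpos
    have hsq : 0 < Complex.normSq ((t:ℂ)/z - 1/(1-(y:ℂ)*m)) :=
      lt_of_lt_of_le (pow_pos (by positivity) 2) hlb
    rw [one_div, Complex.inv_im, imd]
    rw [← hcdef, ← hadef]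
    field_simp
    ring
  have him_eq2 : m.im = a * (∫ t, t / Complex.normSq ((t:ℂ)/z - 1/(1-(y:ℂ)*m)) ∂H)
      + c * (∫ t, 1 / Complex.normSq ((t:ℂ)/z - 1/(1-(y:ℂ)*m)) ∂H) := by
    rw [him_eq, integral_congr_ae hptw, integral_add (hIh.const_mul a) (hIg.const_mul c),
      integral_const_mul, integral_const_mul]
  -- positivity of A
  have hApos : 0 < ∫ t, t / Complex.normSq ((t:ℂ)/z - 1/(1-(y:ℂ)*m)) ∂H := by
    have hnonneg : 0 ≤ᵐ[H] fun t : ℝ => t / Complex.normSq ((t:ℂ)/z - 1/(1-(y:ℂ)*m)) := by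
      filter_upwards [hsupp] with t ht
      exact div_nonneg ht.le (Complex.normSq_nonneg _)
    rcases eq_or_lt_of_le (integral_nonneg_of_ae hnonneg) with h0 | h
    · exfalso
      have hzero : (fun t : ℝ => t / Complex.normSq ((t:ℂ)/z - 1/(1-(y:ℂ)*m))) =ᵐ[H] 0 :=
        (integral_eq_zero_iff_of_nonneg_ae hnonneg hIh).mp h0.symm
      have hpos : ∀ᵐ (t : ℝ) ∂H, 0 < t / Complex.normSq ((t:ℂ)/z - 1/(1-(y:ℂ)*m)) := by
        filter_upwards [hsupp] with t ht
        have hlb : (t*a+c)^2 ≤ Complex.normSq ((t:ℂ)/z - 1/(1-(y:ℂ)*m)) :=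
          normSq_d_lb ht.le hz hcpos
        have hsq : 0 < Complex.normSq ((t:ℂ)/z - 1/(1-(y:ℂ)*m)) :=
          lt_of_lt_of_le (pow_pos (by positivity) 2) hlb
        exact div_pos ht hsq
      obtain ⟨t, h1, h2⟩ := (hpos.and hzero).exists
      simp only [Pi.zero_apply] at h2
      rw [h2] at h1; exact lt_irrefl 0 h1
    · exact h
  -- rewrite the target integrand
  have hKrw : ∀ t : ℝ, y / (Complex.normSq (1-(y:ℂ)*m)
        * Complex.normSq ((t:ℂ)/z - 1/(1-(y:ℂ)*m)))
      = (c/m.im) * (1 / Complex.normSq ((t:ℂ)/z - 1/(1-(y:ℂ)*m))) := by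
    intro t
    have hnsq : 0 < Complex.normSq (1-(y:ℂ)*m) := Complex.normSq_pos.mpr hden
    have hscal : c/m.im = y/Complex.normSq (1-(y:ℂ)*m) := by
      rw [hcdef, imw]
      field_simp
    rw [hscal, div_mul_div_comm, mul_one]
  have hI : 0 ≤ ∫ t, 1 / Complex.normSq ((t:ℂ)/z - 1/(1-(y:ℂ)*m)) ∂H := by
    refine integral_nonneg_of_ae ?_
    filter_upwards with t
    exact div_nonneg zero_le_one (Complex.normSq_nonneg _)
  have : ∫ t, y / (Complex.normSq (1-(y:ℂ)*m)
        * Complex.normSq ((t:ℂ)/z - 1/(1-(y:ℂ)*m))) ∂H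
      = (c/m.im) * ∫ t, 1 / Complex.normSq ((t:ℂ)/z - 1/(1-(y:ℂ)*m)) ∂H := by
    simp_rw [hKrw]
    exact integral_const_mul _ _
  rw [this]
  rw [div_mul_eq_mul_div, div_lt_one him]
  nlinarith [mul_pos hapos hApos]

private lemma norm_one_div_sq (u : ℂ) : ‖1/u‖^2 = 1/Complex.normSq u := by
  rw [norm_div, norm_one, div_pow, one_pow, Complex.sq_norm]

private lemma uniq_pos (H : Measure ℝ) [IsProbabilityMeasure H]
    (hsupp : ∀ᵐ t ∂H, 0 < t) {y : ℝ} (hy : 0 < y) {z : ℂ} (hz : 0 < z.im)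
    {m₁ m₂ : ℂ} (him₁ : 0 < m₁.im) (him₂ : 0 < m₂.im)
    (hden₁ : 1 - (y : ℂ) * m₁ ≠ 0) (hden₂ : 1 - (y : ℂ) * m₂ ≠ 0)
    (heq₁ : m₁ = ∫ t, 1 / ((t : ℂ) / z - 1 / (1 - (y : ℂ) * m₁)) ∂H)
    (heq₂ : m₂ = ∫ t, 1 / ((t : ℂ) / z - 1 / (1 - (y : ℂ) * m₂)) ∂H) :
    m₁ = m₂ := by
  by_contra hne
  have hsub : m₁ - m₂ ≠ 0 := sub_ne_zero.mpr hne
  have hc₁ : 0 < (1/(1-(y:ℂ)*m₁)).im := wim_pos hy him₁ hden₁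
  have hc₂ : 0 < (1/(1-(y:ℂ)*m₂)).im := wim_pos hy him₂ hden₂
  have hIf₁ := int_f H hsupp hy hz him₁ hden₁
  have hIf₂ := int_f H hsupp hy hz him₂ hden₂
  have hIg₁ := int_g H hsupp hy hz him₁ hden₁
  have hIg₂ := int_g H hsupp hy hz him₂ hden₂
  have hK₁ := key_lt_one H hsupp hy hz him₁ hden₁ heq₁
  have hK₂ := key_lt_one H hsupp hy hz him₂ hden₂ heq₂
  set Kc : ℂ := (y:ℂ) * (1/(1-(y:ℂ)*m₁)) * (1/(1-(y:ℂ)*m₂)) with hKc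
  set F : ℝ → ℂ := fun t => Kc * ((1 / ((t : ℂ) / z - 1 / (1 - (y : ℂ) * m₁)))
      * (1 / ((t : ℂ) / z - 1 / (1 - (y : ℂ) * m₂)))) with hF
  -- the pointwise bound
  have hbd : ∀ t : ℝ, ‖F t‖ ≤ (y / (Complex.normSq (1-(y:ℂ)*m₁)
        * Complex.normSq ((t:ℂ)/z - 1/(1-(y:ℂ)*m₁)))
      + y / (Complex.normSq (1-(y:ℂ)*m₂)
        * Complex.normSq ((t:ℂ)/z - 1/(1-(y:ℂ)*m₂)))) / 2 := by
    intro t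
    have h1 : ‖F t‖ = y * ((‖1/(1-(y:ℂ)*m₁)‖ * ‖1 / ((t : ℂ) / z - 1 / (1 - (y : ℂ) * m₁))‖)
        * (‖1/(1-(y:ℂ)*m₂)‖ * ‖1 / ((t : ℂ) / z - 1 / (1 - (y : ℂ) * m₂))‖)) := by
      rw [hF, hKc]
      simp only [norm_mul, Complex.norm_real, Real.norm_eq_abs, _root_.abs_of_pos hy]
      ring
    have h2 : ∀ (u d : ℂ), y / (Complex.normSq u * Complex.normSq d)
        = y * (‖1/u‖ * ‖1/d‖)^2 := by
      intro u d
      rw [mul_pow, norm_one_div_sq, norm_one_div_sq, one_div, one_div, ← mul_inv,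
        div_eq_mul_inv]
    rw [h1, h2, h2]
    set p := ‖1/(1-(y:ℂ)*m₁)‖ * ‖1 / ((t : ℂ) / z - 1 / (1 - (y : ℂ) * m₁))‖
    set q := ‖1/(1-(y:ℂ)*m₂)‖ * ‖1 / ((t : ℂ) / z - 1 / (1 - (y : ℂ) * m₂))‖
    nlinarith [sq_nonneg (p - q), hy.le, mul_nonneg (norm_nonneg (1/(1-(y:ℂ)*m₁))) (norm_nonneg (1 / ((t : ℂ) / z - 1 / (1 - (y : ℂ) * m₁)))), mul_nonneg (norm_nonneg (1/(1-(y:ℂ)*m₂))) (norm_nonneg (1 / ((t : ℂ) / z - 1 / (1 - (y : ℂ) * m₂))))]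
  -- integrability of the dominating function and of F
  have hgint₁ : Integrable (fun t : ℝ => y / (Complex.normSq (1-(y:ℂ)*m₁)
      * Complex.normSq ((t:ℂ)/z - 1/(1-(y:ℂ)*m₁)))) H := by
    have : (fun t : ℝ => y / (Complex.normSq (1-(y:ℂ)*m₁)
        * Complex.normSq ((t:ℂ)/z - 1/(1-(y:ℂ)*m₁))))
        = fun t : ℝ => (y / Complex.normSq (1-(y:ℂ)*m₁))
          * (1 / Complex.normSq ((t:ℂ)/z - 1/(1-(y:ℂ)*m₁))) := by
      funext t
      rw [div_mul_eq_div_div, div_eq_mul_one_div]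
    rw [this]
    exact hIg₁.const_mul _
  have hgint₂ : Integrable (fun t : ℝ => y / (Complex.normSq (1-(y:ℂ)*m₂)
      * Complex.normSq ((t:ℂ)/z - 1/(1-(y:ℂ)*m₂)))) H := by
    have : (fun t : ℝ => y / (Complex.normSq (1-(y:ℂ)*m₂)
        * Complex.normSq ((t:ℂ)/z - 1/(1-(y:ℂ)*m₂))))
        = fun t : ℝ => (y / Complex.normSq (1-(y:ℂ)*m₂))
          * (1 / Complex.normSq ((t:ℂ)/z - 1/(1-(y:ℂ)*m₂))) := by
      funext t
      rw [div_mul_eq_div_div, div_eq_mul_one_div]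
    rw [this]
    exact hIg₂.const_mul _
  have hgint : Integrable (fun t : ℝ => (y / (Complex.normSq (1-(y:ℂ)*m₁)
        * Complex.normSq ((t:ℂ)/z - 1/(1-(y:ℂ)*m₁)))
      + y / (Complex.normSq (1-(y:ℂ)*m₂)
        * Complex.normSq ((t:ℂ)/z - 1/(1-(y:ℂ)*m₂)))) / 2) H :=
    (hgint₁.add hgint₂).div_const 2
  have hFmeas : AEStronglyMeasurable F H :=
    ((measurable_const.mul ((meas_f y z m₁).mul (meas_f y z m₂)))).aestronglyMeasurable
  have hFint : Integrable F H :=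
    Integrable.mono' hgint hFmeas (Filter.Eventually.of_forall hbd)
  -- the fixed point identity gives m₁ - m₂ = (m₁ - m₂) * ∫ F
  have hptw : ∀ᵐ (t : ℝ) ∂H,
      1 / ((t : ℂ) / z - 1 / (1 - (y : ℂ) * m₁)) - 1 / ((t : ℂ) / z - 1 / (1 - (y : ℂ) * m₂))
        = (m₁ - m₂) * F t := by
    filter_upwards [hsupp] with t ht
    have hnz : 0 < Complex.normSq z := Complex.normSq_pos.mpr (fun h => by simp [h] at hz)
    have hA : 0 ≤ t*(z.im/Complex.normSq z) := mul_nonneg ht.le (div_nonneg hz.le hnz.le)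
    have hd₁ : (t : ℂ) / z - 1 / (1 - (y : ℂ) * m₁) ≠ 0 := by
      have hlb := normSq_d_lb ht.le hz hc₁
      have hsq : 0 < Complex.normSq ((t:ℂ)/z - 1/(1-(y:ℂ)*m₁)) :=
        lt_of_lt_of_le (pow_pos (add_pos_of_nonneg_of_pos hA hc₁) 2) hlb
      exact Complex.normSq_pos.mp hsq
    have hd₂ : (t : ℂ) / z - 1 / (1 - (y : ℂ) * m₂) ≠ 0 := by
      have hlb := normSq_d_lb ht.le hz hc₂
      have hsq : 0 < Complex.normSq ((t:ℂ)/z - 1/(1-(y:ℂ)*m₂)) :=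
        lt_of_lt_of_le (pow_pos (add_pos_of_nonneg_of_pos hA hc₂) 2) hlb
      exact Complex.normSq_pos.mp hsq
    have halg : ∀ (d₁ d₂ : ℂ), d₁ ≠ 0 → d₂ ≠ 0 →
        1/d₁ - 1/d₂ = (d₂ - d₁) * (1/d₁ * (1/d₂)) := by
      intro d₁ d₂ h1 h2
      field_simp
    have hdd : ((t:ℂ)/z - 1/(1-(y:ℂ)*m₂)) - ((t:ℂ)/z - 1/(1-(y:ℂ)*m₁))
        = (m₁ - m₂) * ((y:ℂ) * (1/(1-(y:ℂ)*m₁)) * (1/(1-(y:ℂ)*m₂))) := by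
      have e3 : 1/(1-(y:ℂ)*m₁) - 1/(1-(y:ℂ)*m₂)
          = (m₁ - m₂) * ((y:ℂ) * (1/(1-(y:ℂ)*m₁)) * (1/(1-(y:ℂ)*m₂))) := by
        field_simp
        ring
      calc ((t:ℂ)/z - 1/(1-(y:ℂ)*m₂)) - ((t:ℂ)/z - 1/(1-(y:ℂ)*m₁))
          = 1/(1-(y:ℂ)*m₁) - 1/(1-(y:ℂ)*m₂) := by ring
        _ = _ := e3
    rw [hF, hKc]
    rw [halg _ _ hd₁ hd₂, hdd]
    ring
  have hmain : m₁ - m₂ = (m₁ - m₂) * ∫ t, F t ∂H := by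
    conv_lhs => rw [heq₁, heq₂]
    rw [← integral_sub hIf₁ hIf₂, integral_congr_ae hptw, integral_const_mul]
  -- norm bound on ∫ F
  have hlt : ‖∫ t, F t ∂H‖ < 1 := by
    calc ‖∫ t, F t ∂H‖ ≤ ∫ t, ‖F t‖ ∂H := norm_integral_le_integral_norm F
      _ ≤ ∫ t, (y / (Complex.normSq (1-(y:ℂ)*m₁)
            * Complex.normSq ((t:ℂ)/z - 1/(1-(y:ℂ)*m₁)))
          + y / (Complex.normSq (1-(y:ℂ)*m₂)
            * Complex.normSq ((t:ℂ)/z - 1/(1-(y:ℂ)*m₂)))) / 2 ∂H :=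
        integral_mono hFint.norm hgint hbd
      _ < 1 := by
        rw [integral_div, integral_add hgint₁ hgint₂]
        linarith
  have h1 : (m₁ - m₂) * 1 = (m₁ - m₂) * ∫ t, F t ∂H := by rw [mul_one]; exact hmain
  have h2 : (1 : ℂ) = ∫ t, F t ∂H := mul_left_cancel₀ hsub h1
  rw [← h2] at hlt
  simp at hlt

/-- Uniqueness of the solution of m = ∫ 1/(λ/z − 1/(1 − y m)) dH(λ) with
Im(m)·Im(z) > 0. -/
theorem stmt_4 (H : Measure ℝ) [IsProbabilityMeasure H]
    (hsupp : ∀ᵐ t ∂H, 0 < t)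
    (y : ℝ) (hy : y ∈ Set.Ioo (0 : ℝ) 1)
    (z : ℂ) (hz : z.im ≠ 0)
    (m₁ m₂ : ℂ)
    (him₁ : 0 < m₁.im * z.im) (him₂ : 0 < m₂.im * z.im)
    (hden₁ : 1 - (y : ℂ) * m₁ ≠ 0) (hden₂ : 1 - (y : ℂ) * m₂ ≠ 0)
    (heq₁ : m₁ = ∫ t, 1 / ((t : ℂ) / z - 1 / (1 - (y : ℂ) * m₁)) ∂H)
    (heq₂ : m₂ = ∫ t, 1 / ((t : ℂ) / z - 1 / (1 - (y : ℂ) * m₂)) ∂H) :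
    m₁ = m₂ := by
  have hy0 : 0 < y := hy.1
  rcases hz.lt_or_gt with hneg | hpos
  · -- z.im < 0 : pass to conjugates
    have hm₁ : m₁.im < 0 := by nlinarith
    have hm₂ : m₂.im < 0 := by nlinarith
    have hconj : ∀ (m : ℂ), (m = ∫ t, 1 / ((t:ℂ)/z - 1/(1-(y:ℂ)*m)) ∂H) →
        (starRingEnd ℂ) m = ∫ t, 1 / ((t:ℂ)/((starRingEnd ℂ) z)
          - 1/(1-(y:ℂ)*((starRingEnd ℂ) m))) ∂H := by
      intro m hm
      conv_lhs => rw [hm]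
      rw [← integral_conj]
      refine integral_congr_ae (Filter.Eventually.of_forall fun t => ?_)
      simp [map_div₀, map_sub, map_one, map_mul, Complex.conj_ofReal]
    have hzc : 0 < ((starRingEnd ℂ) z).im := by
      rw [Complex.conj_im]; linarith
    have him₁' : 0 < ((starRingEnd ℂ) m₁).im := by rw [Complex.conj_im]; linarith
    have him₂' : 0 < ((starRingEnd ℂ) m₂).im := by rw [Complex.conj_im]; linarith
    have hden₁' : 1 - (y : ℂ) * ((starRingEnd ℂ) m₁) ≠ 0 := by
      intro h
      apply hden₁
      have := congrArg (starRingEnd ℂ) h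
      simpa [map_sub, map_one, map_mul, Complex.conj_ofReal, Complex.conj_conj] using this
    have hden₂' : 1 - (y : ℂ) * ((starRingEnd ℂ) m₂) ≠ 0 := by
      intro h
      apply hden₂
      have := congrArg (starRingEnd ℂ) h
      simpa [map_sub, map_one, map_mul, Complex.conj_ofReal, Complex.conj_conj] using this
    have := uniq_pos H hsupp hy0 hzc him₁' him₂' hden₁' hden₂'
      (hconj m₁ heq₁) (hconj m₂ heq₂)
    exact (starRingEnd ℂ).injective this
  · have hm₁ : 0 < m₁.im := by nlinarith
    have hm₂ : 0 < m₂.im := by nlinarith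
    exact uniq_pos H hsupp hy0 hpos hm₁ hm₂ hden₁ hden₂ heq₁ heq₂
end

section
/- Define a(z₁,z₂) := 1 + (m̲₁ m̲₂/(m̲₂ − m̲₁))·(1/z₁ − 1/z₂), where m̲ⱼ = m̲(1/zⱼ) are nonzero complex numbers with m̲₁ ≠ m̲₂ and z₁ ≠ z₂ nonzero complex numbers. Assume m̲ⱼ are differentiable functions of zⱼ. Then ∂²/∂z₁∂z₂ of ∫₀^{a(z₁,z₂)} dz/(1−z), i.e. ∂/∂z₂ [(∂a/∂z₁)/(1 − a(z₁,z₂))], equals m̲₁′ m̲₂′/(m̲₂ − m̲₁)² − 1/(z₁ − z₂)², where m̲ⱼ′ denotes d m̲(1/zⱼ)/dzⱼ. -/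
/-- The mixed second derivative ∂/∂z₂ [(∂a/∂z₁)/(1 − a)] of the function
a(z₁,z₂) = 1 + (m̲₁m̲₂/(m̲₂−m̲₁))(1/z₁ − 1/z₂), with m̲ⱼ = m̲(1/zⱼ), equals
m̲₁′m̲₂′/(m̲₂ − m̲₁)² − 1/(z₁ − z₂)². -/
theorem stmt_11 (m : ℂ → ℂ) (hm : Differentiable ℂ m)
    (z₁ z₂ : ℂ) (hz₁ : z₁ ≠ 0) (hz₂ : z₂ ≠ 0) (hne : z₁ ≠ z₂)
    (hm₁ : m (1 / z₁) ≠ 0) (hm₂ : m (1 / z₂) ≠ 0)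
    (hmne : m (1 / z₁) ≠ m (1 / z₂))
    (a : ℂ → ℂ → ℂ)
    (ha : ∀ w₁ w₂ : ℂ, a w₁ w₂ =
      1 + (m (1 / w₁) * m (1 / w₂) / (m (1 / w₂) - m (1 / w₁))) * (1 / w₁ - 1 / w₂))
    (hane : a z₁ z₂ ≠ 1) :
    deriv (fun w₂ => (deriv (fun w₁ => a w₁ w₂) z₁) / (1 - a z₁ w₂)) z₂
      = (deriv (fun w => m (1 / w)) z₁) * (deriv (fun w => m (1 / w)) z₂)
          / (m (1 / z₂) - m (1 / z₁)) ^ 2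
        - 1 / (z₁ - z₂) ^ 2 := by
  set M : ℂ → ℂ := fun w => m (1 / w) with hMdef
  have hMd : ∀ w : ℂ, w ≠ 0 → DifferentiableAt ℂ M w := by
    intro w hw
    exact (hm (1 / w)).comp w ((differentiableAt_const 1).div differentiableAt_id hw)
  have hM₁ := (hMd z₁ hz₁).hasDerivAt
  have hMc : ContinuousAt M z₂ := (hMd z₂ hz₂).continuousAt
  have h1 : ∀ᶠ w in nhds z₂, w ≠ 0 := eventually_ne_nhds hz₂
  have h2 : ∀ᶠ w in nhds z₂, w ≠ z₁ := eventually_ne_nhds (Ne.symm hne)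
  have h3 : ∀ᶠ w in nhds z₂, M w ≠ 0 := hMc.eventually_ne hm₂
  have h4 : ∀ᶠ w in nhds z₂, M w ≠ M z₁ := hMc.eventually_ne (Ne.symm hmne)
  have key : (fun w => deriv (fun w₁ => a w₁ w) z₁ / (1 - a z₁ w)) =ᶠ[nhds z₂]
      (fun w => -(deriv M z₁) * M w / (M z₁ * (M w - M z₁)) + w / (z₁ * (w - z₁))) := by
    filter_upwards [h1, h2, h3, h4] with w hw0 hwz hMw0 hMwM
    have hden : M w - M z₁ ≠ 0 := sub_ne_zero.mpr hMwM
    have hz1w : w - z₁ ≠ 0 := sub_ne_zero.mpr hwz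
    have hinner : deriv (fun w₁ => a w₁ w) z₁
        = deriv M z₁ * (M w) ^ 2 / (M w - M z₁) ^ 2 * (1 / z₁ - 1 / w)
          - M z₁ * M w / (M w - M z₁) * (1 / z₁ ^ 2) := by
      have hA : HasDerivAt (fun w₁ => M w₁ * M w) (deriv M z₁ * M w) z₁ := hM₁.mul_const _
      have hB : HasDerivAt (fun w₁ => M w - M w₁) (-(deriv M z₁)) z₁ := hM₁.const_sub _
      have hC : HasDerivAt (fun w₁ => M w₁ * M w / (M w - M w₁)) _ z₁ := hA.div hB hden
      have hD : HasDerivAt (fun w₁ : ℂ => 1 / w₁ - 1 / w) (-(1 / z₁ ^ 2)) z₁ := by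
        simpa [one_div] using ((hasDerivAt_inv hz₁).sub_const (1 / w))
      have hE : HasDerivAt (fun w₁ => 1 + M w₁ * M w / (M w - M w₁) * (1 / w₁ - 1 / w)) _ z₁ :=
        (hC.mul hD).const_add 1
      have hfun : (fun w₁ => a w₁ w)
          = fun w₁ => 1 + M w₁ * M w / (M w - M w₁) * (1 / w₁ - 1 / w) := by
        funext w₁; rw [ha]
      rw [hfun, hE.deriv]
      field_simp
      ring
    have hiv : (1 : ℂ) / z₁ - 1 / w = (w - z₁) / (z₁ * w) := by
      field_simp
    have ha' : 1 - a z₁ w = -(M z₁ * M w / (M w - M z₁)) * ((w - z₁) / (z₁ * w)) := by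
      rw [ha, ← hiv]; ring
    have hm₁' : M z₁ ≠ 0 := hm₁
    have hD : -(M z₁ * M w / (M w - M z₁)) * ((w - z₁) / (z₁ * w)) ≠ 0 := by
      refine mul_ne_zero (neg_ne_zero.mpr (div_ne_zero (mul_ne_zero hm₁' hMw0) hden))
        (div_ne_zero hz1w (mul_ne_zero hz₁ hw0))
    rw [hinner, ha', hiv, div_eq_iff hD]
    field_simp
    ring
  rw [key.deriv_eq]
  have hM₂ := (hMd z₂ hz₂).hasDerivAt
  have hden₂ : M z₁ * (M z₂ - M z₁) ≠ 0 :=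
    mul_ne_zero hm₁ (sub_ne_zero.mpr (Ne.symm hmne))
  have hden₃ : z₁ * (z₂ - z₁) ≠ 0 := mul_ne_zero hz₁ (sub_ne_zero.mpr (Ne.symm hne))
  have hP : HasDerivAt (fun w => -(deriv M z₁) * M w) (-(deriv M z₁) * deriv M z₂) z₂ :=
    hM₂.const_mul _
  have hQ : HasDerivAt (fun w => M z₁ * (M w - M z₁)) (M z₁ * deriv M z₂) z₂ := by
    simpa using (hM₂.sub_const (M z₁)).const_mul (M z₁)
  have hR : HasDerivAt (fun w : ℂ => z₁ * (w - z₁)) z₁ z₂ := by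
    simpa using ((hasDerivAt_id z₂).sub_const z₁).const_mul z₁
  have hS : HasDerivAt
      (fun w => -(deriv M z₁) * M w / (M z₁ * (M w - M z₁)) + w / (z₁ * (w - z₁))) _ z₂ :=
    (hP.div hQ hden₂).add ((hasDerivAt_id' z₂).div hR hden₃)
  have hG : HasDerivAt
      (fun w => -(deriv M z₁) * M w / (M z₁ * (M w - M z₁)) + w / (z₁ * (w - z₁)))
      (deriv M z₁ * deriv M z₂ / (M z₂ - M z₁) ^ 2 - 1 / (z₁ - z₂) ^ 2) z₂ := by
    convert hS using 1
    have hsub : M z₂ - M z₁ ≠ 0 := sub_ne_zero.mpr (Ne.symm hmne)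
    have hsub' : z₂ - z₁ ≠ 0 := sub_ne_zero.mpr (Ne.symm hne)
    have hsub'' : z₁ - z₂ ≠ 0 := sub_ne_zero.mpr hne
    have hm₁' : M z₁ ≠ 0 := hm₁
    field_simp
    ring
  exact hG.deriv
end

section
/- Let H be a probability measure on (0,∞) and y ∈ (0,1). For distinct nonzero complex numbers z₁, z₂ (non-real), with m̲ⱼ := m̲(1/zⱼ) satisfying ∫ dH(t)/(t + m̲ⱼ) = (1/y)(1/zⱼ + 1/m̲ⱼ) and m̲₁ ≠ m̲₂, the quantity a(z₁,z₂) := y ∫ m̲₁ m̲₂ / ((t + m̲₁)(t + m̲₂)) dH(t) equals 1 + (m̲₁ m̲₂/(m̲₂ − m̲₁))·(1/z₁ − 1/z₂). -/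
open MeasureTheory

/-- Partial fraction computation of a(z₁,z₂) = y ∫ m̲₁m̲₂/((t+m̲₁)(t+m̲₂)) dH(t). -/
theorem stmt_12 (H : Measure ℝ) [IsProbabilityMeasure H]
    (hsupp : ∀ᵐ t ∂H, 0 < t)
    (y : ℝ) (hy : y ∈ Set.Ioo (0 : ℝ) 1)
    (z₁ z₂ : ℂ) (hz₁ : z₁ ≠ 0) (hz₂ : z₂ ≠ 0)
    (him₁ : z₁.im ≠ 0) (him₂ : z₂.im ≠ 0) (hne : z₁ ≠ z₂)
    (m₁ m₂ : ℂ) (hm₁ : m₁ ≠ 0) (hm₂ : m₂ ≠ 0) (hmne : m₁ ≠ m₂)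
    (hden₁ : ∀ᵐ (t : ℝ) ∂H, (t : ℂ) + m₁ ≠ 0)
    (hden₂ : ∀ᵐ (t : ℝ) ∂H, (t : ℂ) + m₂ ≠ 0)
    (hint₁ : Integrable (fun t : ℝ => 1 / ((t : ℂ) + m₁)) H)
    (hint₂ : Integrable (fun t : ℝ => 1 / ((t : ℂ) + m₂)) H)
    (heq₁ : ∫ t, 1 / ((t : ℂ) + m₁) ∂H = (1 / (y : ℂ)) * (1 / z₁ + 1 / m₁))
    (heq₂ : ∫ t, 1 / ((t : ℂ) + m₂) ∂H = (1 / (y : ℂ)) * (1 / z₂ + 1 / m₂)) :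
    (y : ℂ) * ∫ t, m₁ * m₂ / (((t : ℂ) + m₁) * ((t : ℂ) + m₂)) ∂H
      = 1 + (m₁ * m₂ / (m₂ - m₁)) * (1 / z₁ - 1 / z₂) := by
  have hmne' : m₂ - m₁ ≠ 0 := sub_ne_zero.mpr (Ne.symm hmne)
  have hmne'' : -m₁ + m₂ ≠ 0 := by rwa [neg_add_eq_sub]
  set c : ℂ := m₁ * m₂ / (m₂ - m₁) with hc
  have key : ∫ t, m₁ * m₂ / (((t : ℂ) + m₁) * ((t : ℂ) + m₂)) ∂H
      = c * ((∫ t, 1 / ((t : ℂ) + m₁) ∂H) - ∫ t, 1 / ((t : ℂ) + m₂) ∂H) := by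
    rw [← integral_sub hint₁ hint₂, ← integral_const_mul]
    apply integral_congr_ae
    filter_upwards [hden₁, hden₂] with t h1 h2
    field_simp
    linear_combination (-(m₁*m₂)) * mul_inv_cancel₀ hmne''
  rw [key, heq₁, heq₂]
  have hy0 : (y : ℂ) ≠ 0 := by exact_mod_cast ne_of_gt hy.1
  field_simp
  linear_combination (m₁*m₂*z₁*z₂) * mul_inv_cancel₀ hmne''
end
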